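/- Let $w \in \mathbb{C}$ with $|1+w| < 1$ and $\mathrm{Re}(w) \ge -1$ (i.e., writing $w = -1 + re^{i\theta}$ with $0 < r < 1$ and $\theta \in (-\pi/2, \pi/2)$). Then for all $t \in (0,1)$: $|1 + w(1-t)| \ge \frac{1}{\sqrt{5}}\,(|1+w| + t)$. -/

import Mathlib

lemma stmt_7_aux (r t : ℝ) (hr0 : 0 ≤ r) (hr1 : r ≤ 1) (ht1 : t ≤ 1) :
    (r + t)^2 ≤ 5 * ((1-t)^2 * r^2 + t^2) := by
  rcases le_or_gt t (1/2) with h | h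
  · have h' : (0:ℝ) < 5*(1-t)^2 - 1 := by nlinarith
    have h'' : (0:ℝ) ≤ 4*(5*(1-t)^2 - 1) - 1 := by nlinarith
    nlinarith [sq_nonneg ((5*(1-t)^2-1)*r - t), mul_nonneg (sq_nonneg t) h'', h', sq_nonneg (r - t)]
  · have h2 : 0 ≤ 2*t - (5*(1-t)^2-1)*(r+1) := by
      nlinarith [sq_nonneg (1-t), mul_nonneg (sub_nonneg.2 hr1) (sq_nonneg (1-t))]
    nlinarith [sq_nonneg (3*t-2), mul_nonneg (sub_nonneg.2 hr1) h2]

theorem stmt_7 (w : ℂ) (h1 : ‖1 + w‖ < 1) (h2 : w.re ≥ -1) :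
    ∀ t : ℝ, t ∈ Set.Ioo (0 : ℝ) 1 →
      ‖1 + w * (1 - (t : ℂ))‖ ≥
        (‖1 + w‖ + t) / Real.sqrt 5 := by
  intro t ht
  obtain ⟨ht0, ht1⟩ := ht
  set r := ‖1 + w‖ with hr
  have hr0 : 0 ≤ r := norm_nonneg _
  have hre : 0 ≤ 1 + w.re := by linarith
  have hr2 : r ^ 2 = (1 + w.re) ^ 2 + w.im ^ 2 := by
    rw [hr, Complex.sq_norm, Complex.normSq_apply]
    simp
    ring
  have hz : ‖1 + w * (1 - (t : ℂ))‖ ^ 2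
      = (1 + w.re * (1 - t)) ^ 2 + (w.im * (1 - t)) ^ 2 := by
    rw [Complex.sq_norm, Complex.normSq_apply]
    simp
    ring
  have h5 : (0 : ℝ) < Real.sqrt 5 := Real.sqrt_pos.2 (by norm_num)
  have hnn : 0 ≤ (r + t) / Real.sqrt 5 := by positivity
  have key : ((r + t) / Real.sqrt 5) ^ 2 ≤ ‖1 + w * (1 - (t : ℂ))‖ ^ 2 := by
    rw [div_pow, Real.sq_sqrt (by norm_num : (0:ℝ) ≤ 5), hz]
    rw [div_le_iff₀ (by norm_num : (0:ℝ) < 5)]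
    have step1 : (1-t)^2 * r^2 + t^2 ≤ (1 + w.re * (1 - t)) ^ 2 + (w.im * (1 - t)) ^ 2 := by
      nlinarith [mul_nonneg (mul_nonneg ht0.le (by linarith : (0:ℝ) ≤ 1 - t)) hre]
    have step2 := stmt_7_aux r t hr0 h1.le ht1.le
    nlinarith [step1, step2]
  calc (r + t) / Real.sqrt 5 = Real.sqrt (((r + t) / Real.sqrt 5) ^ 2) :=
        (Real.sqrt_sq hnn).symm
    _ ≤ Real.sqrt (‖1 + w * (1 - (t : ℂ))‖ ^ 2) := Real.sqrt_le_sqrt key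
    _ = ‖1 + w * (1 - (t : ℂ))‖ := Real.sqrt_sq (norm_nonneg _)
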